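/- The variance of the threshold-based PPS estimator satisfies Var(Y) = ∑_{i : w_i < τ} w_i·(τ − w_i); in particular Var(Y) ≤ τ·W. -/

import Mathlib

open scoped BigOperators
open MeasureTheory

lemma variance_const_add' {Ω : Type*} [MeasurableSpace Ω] (μ : Measure Ω)
    [IsProbabilityMeasure μ] (c : ℝ) (X : Ω → ℝ) (hX : Integrable X μ) :
    ProbabilityTheory.variance (fun ω => c + X ω) μ = ProbabilityTheory.variance X μ := by
  unfold ProbabilityTheory.variance ProbabilityTheory.evariance
  congr 1
  have h : ∫ ω, (c + X ω) ∂μ = c + ∫ ω, X ω ∂μ := by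
    rw [integral_add (integrable_const c) hX, integral_const]
    simp
  refine lintegral_congr fun ω => ?_
  rw [h]
  congr 1
  congr 1
  ring_nf

lemma variance_indicator_const' {Ω : Type*} [MeasurableSpace Ω] (μ : Measure Ω)
    [IsProbabilityMeasure μ] {A : Set Ω} (hA : MeasurableSet A) (c : ℝ) :
    ProbabilityTheory.variance (A.indicator (fun _ => c)) μ
      = c ^ 2 * (μ A).toReal - (c * (μ A).toReal) ^ 2 := by
  rw [ProbabilityTheory.variance_eq_sub
    (memLp_indicator_const 2 hA c (Or.inr (measure_ne_top μ A)))]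
  have h2 : (A.indicator (fun _ => c)) ^ 2 = A.indicator (fun _ => c ^ 2) := by
    ext ω
    by_cases h : ω ∈ A <;> simp [Set.indicator_of_mem, Set.indicator_of_notMem, h]
  rw [h2, integral_indicator_const _ hA, integral_indicator_const _ hA]
  simp [mul_comm, Measure.real]

/-- The variance of the threshold-based PPS estimator satisfies
`Var(Y) = ∑_{i : w_i < τ} w_i·(τ − w_i)`; in particular `Var(Y) ≤ τ·W`,
where `Y = ∑_{i : w_i ≥ τ} w_i + τ·|{i : w_i < τ ∧ r_i ≤ w_i/τ}|`,
`W = ∑ᵢ w_i`, and `r₁,…,r_m` are i.i.d. uniform on `[0,1]`. -/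
theorem pps_estimator_variance
    {Ω : Type*} [MeasurableSpace Ω] (μ : Measure Ω) [IsProbabilityMeasure μ]
    (m : ℕ) (w : Fin m → ℝ) (hw : ∀ i, 0 ≤ w i)
    (τ : ℝ) (hτ : 0 < τ)
    (r : Fin m → Ω → ℝ)
    (hr_meas : ∀ i, Measurable (r i))
    (hr_indep : ProbabilityTheory.iIndepFun r μ)
    (hr_unif : ∀ i, Measure.map (r i) μ = volume.restrict (Set.Icc (0 : ℝ) 1))
    (Y : Ω → ℝ)
    (hY : ∀ ω, Y ω = (∑ i ∈ Finset.univ.filter (fun i => τ ≤ w i), w i)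
        + τ * ((Finset.univ.filter (fun i => w i < τ ∧ r i ω ≤ w i / τ)).card : ℝ)) :
    ProbabilityTheory.variance Y μ
        = ∑ i ∈ Finset.univ.filter (fun i => w i < τ), w i * (τ - w i)
      ∧ ProbabilityTheory.variance Y μ ≤ τ * ∑ i, w i := by
  classical
  set S : Finset (Fin m) := Finset.univ.filter (fun i => w i < τ) with hS
  set C : ℝ := ∑ i ∈ Finset.univ.filter (fun i => τ ≤ w i), w i with hC
  -- the individual indicator random variables
  set g : Fin m → ℝ → ℝ := fun i => (Set.Iic (w i / τ)).indicator (fun _ => τ) with hg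
  set X : Fin m → Ω → ℝ := fun i => g i ∘ r i with hX
  have hgmeas : ∀ i, Measurable (g i) :=
    fun i => (measurable_const.indicator measurableSet_Iic)
  have hXeq : ∀ i, X i = Set.indicator ((r i) ⁻¹' (Set.Iic (w i / τ))) (fun _ => τ) := by
    intro i
    ext ω
    simp [hX, hg, Set.indicator, Set.mem_preimage]
  -- pointwise decomposition of Y
  have hYdecomp : ∀ ω, Y ω = C + ∑ i ∈ S, X i ω := by
    intro ω
    rw [hY ω]
    congr 1
    have hfilter : Finset.univ.filter (fun i => w i < τ ∧ r i ω ≤ w i / τ)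
        = S.filter (fun i => r i ω ≤ w i / τ) := by
      rw [hS, Finset.filter_filter]
    rw [hfilter]
    have h1 : ∑ i ∈ S, X i ω = ∑ i ∈ S, (if r i ω ≤ w i / τ then τ else 0) :=
      Finset.sum_congr rfl fun i _ => by
        by_cases h : r i ω ≤ w i / τ <;>
          simp [hX, hg, Set.indicator, Set.mem_Iic, h]
    rw [h1, ← Finset.sum_filter, Finset.sum_const, nsmul_eq_mul, mul_comm]
  -- measure of the events
  have hmeas : ∀ i, w i < τ → (μ ((r i) ⁻¹' (Set.Iic (w i / τ)))).toReal = w i / τ := by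
    intro i hi
    have hp0 : 0 ≤ w i / τ := div_nonneg (hw i) hτ.le
    have hp1 : w i / τ ≤ 1 := by
      rw [div_le_one hτ]; exact hi.le
    rw [← Measure.map_apply (hr_meas i) measurableSet_Iic, hr_unif i,
      Measure.restrict_apply measurableSet_Iic]
    have : Set.Iic (w i / τ) ∩ Set.Icc (0 : ℝ) 1 = Set.Icc 0 (w i / τ) := by
      ext x
      simp only [Set.mem_inter_iff, Set.mem_Iic, Set.mem_Icc]
      constructor
      · rintro ⟨h1, h2, h3⟩; exact ⟨h2, h1⟩
      · rintro ⟨h1, h2⟩; exact ⟨h2, h1, h2.trans hp1⟩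
    rw [this, Real.volume_Icc, ENNReal.toReal_ofReal (by simpa using hp0)]
    simp
  -- Memℒp
  have hXmem : ∀ i, MemLp (X i) 2 μ := by
    intro i
    rw [hXeq i]
    exact memLp_indicator_const 2 ((hr_meas i) measurableSet_Iic) τ
      (Or.inr (measure_ne_top μ _))
  -- variance of each X i
  have hvarX : ∀ i ∈ S, ProbabilityTheory.variance (X i) μ = w i * (τ - w i) := by
    intro i hi
    have hiw : w i < τ := by simpa [hS] using hi
    rw [hXeq i, variance_indicator_const' μ ((hr_meas i) measurableSet_Iic) τ,
      hmeas i hiw]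
    field_simp
  -- independence
  have hpair : Set.Pairwise ↑S fun i j => ProbabilityTheory.IndepFun (X i) (X j) μ := by
    intro i _ j _ hij
    exact (hr_indep.indepFun hij).comp (hgmeas i) (hgmeas j)
  -- variance computation
  have hYfun : Y = fun ω => C + (∑ i ∈ S, X i) ω := by
    ext ω
    rw [hYdecomp ω]
    simp
  have hsummem : MemLp (∑ i ∈ S, X i) 2 μ := memLp_finsetSum' _ fun i _ => hXmem i
  have hvar : ProbabilityTheory.variance Y μ = ∑ i ∈ S, w i * (τ - w i) := by
    rw [hYfun, variance_const_add' μ C _ (hsummem.integrable one_le_two),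
      ProbabilityTheory.IndepFun.variance_sum (fun i _ => hXmem i) hpair]
    exact Finset.sum_congr rfl hvarX
  refine ⟨hvar, ?_⟩
  rw [hvar]
  calc ∑ i ∈ S, w i * (τ - w i) ≤ ∑ i ∈ S, τ * w i := by
        refine Finset.sum_le_sum fun i _ => ?_
        rw [mul_comm τ (w i)]
        exact mul_le_mul_of_nonneg_left (by linarith [hw i]) (hw i)
    _ ≤ ∑ i, τ * w i := by
        refine Finset.sum_le_sum_of_subset_of_nonneg (Finset.filter_subset _ _)
          fun i _ _ => mul_nonneg hτ.le (hw i)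
    _ = τ * ∑ i, w i := by rw [Finset.mul_sum]
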